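/- Let H : ℝⁿ → Set ℝⁿ be a set-valued map and x ∈ ℝⁿ. Assume H is outer semicontinuous at x (whenever z_j → x, h_j ∈ H(z_j), and h_j → h, one has h ∈ H(x)) and locally bounded at x (there exist r > 0 and M > 0 such that |h| ≤ M for every z in the closed ball B(x,r) and every h ∈ H(z)). Then for every v ∈ ℝⁿ such that there exist sequences (y_j, α_j) → (x, 0) with α_j ≥ 0 and u_j ∈ co H(B(y_j, α_j)) with u_j → v, one has v ∈ co H(x); that is, the outer limit limsup_{(y,α)→(x,0)} co H(B(y,α)) is contained in co H(x). -/

import Mathlib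

open Filter Pointwise

private lemma pad_sum_aux {M : Type*} [AddCommMonoid M] {k d : ℕ} (hkd : k ≤ d)
    (g : Fin k → M) :
    ∑ i : Fin d, (if h : (i : ℕ) < k then g ⟨i, h⟩ else 0) = ∑ i : Fin k, g i := by
  have h1 : ∑ i : Fin d, (if h : (i : ℕ) < k then g ⟨i, h⟩ else 0)
      = ∑ i ∈ Finset.range d, (if h : i < k then g ⟨i, h⟩ else 0) :=
    Fin.sum_univ_eq_sum_range (fun i => if h : i < k then g ⟨i, h⟩ else 0) d
  have h2 : ∑ i ∈ Finset.range d, (if h : i < k then g ⟨i, h⟩ else 0)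
      = ∑ i ∈ Finset.range k, (if h : i < k then g ⟨i, h⟩ else 0) :=
    (Finset.sum_subset (Finset.range_subset_range.mpr hkd)
      (fun i _ hi => dif_neg (by simpa using hi))).symm
  have h3 : ∑ i ∈ Finset.range k, (if h : i < k then g ⟨i, h⟩ else 0)
      = ∑ i : Fin k, (if h : (i : ℕ) < k then g ⟨i, h⟩ else 0) :=
    (Fin.sum_univ_eq_sum_range (fun i => if h : i < k then g ⟨i, h⟩ else 0) k).symm
  rw [h1, h2, h3]
  refine Finset.sum_congr rfl fun i _ => ?_
  rw [dif_pos i.isLt]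

private lemma isCompact_convexHull_aux {E : Type} [NormedAddCommGroup E] [NormedSpace ℝ E]
    [FiniteDimensional ℝ E] {s : Set E} (hs : IsCompact s) :
    IsCompact (convexHull ℝ s) := by
  rcases s.eq_empty_or_nonempty with rfl | ⟨s₀, hs₀⟩
  · simp [convexHull_empty]
  set d := Module.finrank ℝ E + 1 with hd
  set f : (Fin d → ℝ) × (Fin d → E) → E := fun q => ∑ i, q.1 i • q.2 i with hf
  have hfc : Continuous f := by
    apply continuous_finset_sum
    intro i _
    exact ((continuous_apply i).comp continuous_fst).smul
      ((continuous_apply i).comp continuous_snd)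
  set T : Set ((Fin d → ℝ) × (Fin d → E)) :=
    (stdSimplex ℝ (Fin d)) ×ˢ (Set.univ.pi fun _ => s) with hT
  have hTc : IsCompact T :=
    (isCompact_stdSimplex ℝ (Fin d)).prod (isCompact_univ_pi fun _ => hs)
  have himg : convexHull ℝ s = f '' T := by
    apply Set.Subset.antisymm
    · intro x hx
      obtain ⟨ι, hιf, z, w, hzs, hai, hwpos, hwsum, hwz⟩ :=
        eq_pos_convex_span_of_mem_convexHull hx
      have hk : Fintype.card ι ≤ d := by
        refine le_trans hai.card_le_finrank_succ (by
          simp only [hd]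
          exact Nat.add_le_add_right (Submodule.finrank_le _) 1)
      set k := Fintype.card ι with hkdef
      set e : Fin k ≃ ι := (Fintype.equivFin ι).symm with he
      set w' : Fin d → ℝ := fun i => if h : (i : ℕ) < k then w (e ⟨i, h⟩) else 0 with hw'
      set p' : Fin d → E := fun i => if h : (i : ℕ) < k then z (e ⟨i, h⟩) else s₀ with hp'
      refine ⟨(w', p'), ⟨⟨?_, ?_⟩, ?_⟩, ?_⟩
      · intro i
        simp only [hw']
        split_ifs with h
        · exact (hwpos _).le
        · exact le_refl 0
      · calc ∑ i, w' i = ∑ i : Fin k, w (e i) := pad_sum_aux hk (fun i => w (e i))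
          _ = ∑ j, w j := Equiv.sum_comp e w
          _ = 1 := hwsum
      · intro i _
        simp only [hp']
        split_ifs with h
        · exact hzs ⟨_, rfl⟩
        · exact hs₀
      · simp only [hf]
        have heq : ∀ i : Fin d, w' i • p' i =
            (if h : (i : ℕ) < k then w (e ⟨i, h⟩) • z (e ⟨i, h⟩) else 0) := by
          intro i
          simp only [hw', hp']
          split_ifs with h <;> simp
        calc ∑ i, w' i • p' i
            = ∑ i : Fin d, (if h : (i : ℕ) < k
                then w (e ⟨i, h⟩) • z (e ⟨i, h⟩) else 0) :=
              Finset.sum_congr rfl fun i _ => heq i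
          _ = ∑ i : Fin k, w (e i) • z (e i) :=
              pad_sum_aux hk (fun j => w (e j) • z (e j))
          _ = ∑ j, w j • z j := Equiv.sum_comp e (fun j => w j • z j)
          _ = x := hwz
    · rintro _ ⟨⟨w, p⟩, ⟨⟨hw0, hw1⟩, hp⟩, rfl⟩
      exact (convex_convexHull ℝ s).sum_mem (fun i _ => hw0 i) hw1
        (fun i _ => subset_convexHull ℝ s (hp i (Set.mem_univ i)))
  rw [himg]
  exact hTc.image hfc

/-- If `H` is outer semicontinuous and locally bounded at `x`, then the
outer limit of `(y,α) ↦ co H(B(y,α))` at `(x,0)` is contained in `co H(x)`. -/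
theorem outer_limit_co_enlargement_subset {n : ℕ}
    (H : EuclideanSpace ℝ (Fin n) → Set (EuclideanSpace ℝ (Fin n)))
    (x : EuclideanSpace ℝ (Fin n))
    (hosc : ∀ (z h : ℕ → EuclideanSpace ℝ (Fin n)) (hl : EuclideanSpace ℝ (Fin n)),
      Tendsto z atTop (nhds x) → (∀ j, h j ∈ H (z j)) → Tendsto h atTop (nhds hl) →
      hl ∈ H x)
    (hlb : ∃ r > (0 : ℝ), ∃ M > (0 : ℝ), ∀ z ∈ Metric.closedBall x r, ∀ h ∈ H z, ‖h‖ ≤ M)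
    (v : EuclideanSpace ℝ (Fin n))
    (hv : ∃ (y : ℕ → EuclideanSpace ℝ (Fin n)) (a : ℕ → ℝ)
        (u : ℕ → EuclideanSpace ℝ (Fin n)),
        (∀ j, 0 ≤ a j) ∧ Tendsto y atTop (nhds x) ∧ Tendsto a atTop (nhds (0 : ℝ)) ∧
        (∀ j, u j ∈ convexHull ℝ (⋃ z ∈ Metric.closedBall (y j) (a j), H z)) ∧
        Tendsto u atTop (nhds v)) :
    v ∈ convexHull ℝ (H x) := by
  obtain ⟨r, hr, M, hM, hbd⟩ := hlb
  obtain ⟨y, a, u, ha, hy, haz, hu, huv⟩ := hv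
  -- Key claim: for every ε > 0, eventually every point of H(B(y j, a j)) is within ε of H x.
  have claim : ∀ ε > (0 : ℝ), ∀ᶠ j in atTop,
      ∀ z ∈ Metric.closedBall (y j) (a j), ∀ h' ∈ H z, ∃ w ∈ H x, dist h' w ≤ ε := by
    intro ε hε
    by_contra hcon
    rw [Filter.not_eventually] at hcon
    obtain ⟨φ, hφ, hφP⟩ := Filter.extraction_of_frequently_atTop hcon
    -- choose bad points
    choose z hz h hh hfar using fun k => by
      have := hφP k
      push_neg at this
      exact this
    -- z tends to x
    have hyz : Tendsto (fun k => y (φ k)) atTop (nhds x) := hy.comp hφ.tendsto_atTop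
    have haz' : Tendsto (fun k => a (φ k)) atTop (nhds (0 : ℝ)) := haz.comp hφ.tendsto_atTop
    have hzx : Tendsto z atTop (nhds x) := by
      rw [tendsto_iff_dist_tendsto_zero]
      apply squeeze_zero (fun k => dist_nonneg)
        (g := fun k => a (φ k) + dist (y (φ k)) x)
      · intro k
        calc dist (z k) x ≤ dist (z k) (y (φ k)) + dist (y (φ k)) x := dist_triangle _ _ _
          _ ≤ a (φ k) + dist (y (φ k)) x := by
              have := Metric.mem_closedBall.mp (hz k); linarith
      · have : Tendsto (fun k => dist (y (φ k)) x) atTop (nhds 0) :=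
          tendsto_iff_dist_tendsto_zero.mp hyz
        simpa using haz'.add this
    -- eventually z k ∈ closedBall x r
    obtain ⟨N, hN⟩ := (Metric.tendsto_atTop.mp hzx r hr)
    have hball : ∀ k, z (k + N) ∈ Metric.closedBall x r := by
      intro k
      exact Metric.mem_closedBall.mpr (le_of_lt (hN (k + N) (Nat.le_add_left _ _)))
    have hhb : ∀ k, h (k + N) ∈ Metric.closedBall (0 : EuclideanSpace ℝ (Fin n)) M := by
      intro k
      rw [Metric.mem_closedBall, dist_zero_right]
      exact hbd _ (hball k) _ (hh (k + N))
    obtain ⟨hl, _, ψ, hψ, hψt⟩ :=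
      (isCompact_closedBall (0 : EuclideanSpace ℝ (Fin n)) M).tendsto_subseq hhb
    have hzx' : Tendsto (fun k => z (ψ k + N)) atTop (nhds x) := by
      have h1 : Tendsto (fun k => k + N) atTop atTop := tendsto_add_atTop_nat N
      exact (hzx.comp h1).comp hψ.tendsto_atTop
    have hlmem : hl ∈ H x :=
      hosc (fun k => z (ψ k + N)) (fun k => h (ψ k + N)) hl hzx'
        (fun k => hh _) hψt
    -- contradiction with ε < dist
    have : ∀ᶠ k in atTop, dist (h (ψ k + N)) hl < ε := by
      have := Metric.tendsto_atTop.mp hψt ε hε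
      obtain ⟨K, hK⟩ := this
      exact eventually_atTop.mpr ⟨K, fun k hk => hK k hk⟩
    obtain ⟨k, hk⟩ := this.exists
    exact absurd hk (not_lt.mpr (le_of_lt (hfar (ψ k + N) hl hlmem)))
  -- H x is compact
  have hHx_sub : H x ⊆ Metric.closedBall (0 : EuclideanSpace ℝ (Fin n)) M := by
    intro w hw
    rw [Metric.mem_closedBall, dist_zero_right]
    exact hbd x (Metric.mem_closedBall_self hr.le) w hw
  have hHx_closed : IsClosed (H x) := by
    apply IsSeqClosed.isClosed
    intro f p hf hfp
    exact hosc (fun _ => x) f p tendsto_const_nhds hf hfp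
  have hHx_compact : IsCompact (H x) :=
    (isCompact_closedBall _ _).of_isClosed_subset hHx_closed hHx_sub
  have hK_compact : IsCompact (convexHull ℝ (H x)) := isCompact_convexHull_aux hHx_compact
  -- H x is nonempty
  have hHx_ne : (H x).Nonempty := by
    obtain ⟨j, hj⟩ := (claim 1 one_pos).exists
    have h0 := hu j
    have hS_ne : (⋃ z ∈ Metric.closedBall (y j) (a j), H z).Nonempty := by
      by_contra hS
      rw [Set.not_nonempty_iff_eq_empty] at hS
      rw [hS, convexHull_empty] at h0
      exact h0
    obtain ⟨h', hh'⟩ := hS_ne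
    simp only [Set.mem_iUnion] at hh'
    obtain ⟨z, hz, hzH⟩ := hh'
    obtain ⟨w, hw, -⟩ := hj z hz h' hzH
    exact ⟨w, hw⟩
  -- For each ε > 0, v ∈ co H x + closedBall 0 ε
  have key : ∀ ε > (0 : ℝ),
      v ∈ convexHull ℝ (H x) + Metric.closedBall (0 : EuclideanSpace ℝ (Fin n)) ε := by
    intro ε hε
    have hcls : IsClosed (convexHull ℝ (H x) + Metric.closedBall
        (0 : EuclideanSpace ℝ (Fin n)) ε) :=
      (hK_compact.add (isCompact_closedBall _ _)).isClosed
    refine hcls.mem_of_tendsto huv ?_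
    filter_upwards [claim ε hε] with j hj
    have hsub : (⋃ z ∈ Metric.closedBall (y j) (a j), H z) ⊆
        H x + Metric.closedBall (0 : EuclideanSpace ℝ (Fin n)) ε := by
      intro h' hh'
      simp only [Set.mem_iUnion] at hh'
      obtain ⟨z, hz, hzH⟩ := hh'
      obtain ⟨w, hw, hdist⟩ := hj z hz h' hzH
      refine ⟨w, hw, h' - w, ?_, add_sub_cancel w h'⟩
      rw [Metric.mem_closedBall, dist_zero_right]
      rw [← dist_eq_norm]
      exact hdist
    have := convexHull_mono hsub (hu j)
    rwa [convexHull_add, (convex_closedBall _ _).convexHull_eq] at this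
  -- conclude
  have hK_closed : IsClosed (convexHull ℝ (H x)) := hK_compact.isClosed
  have hK_ne : (convexHull ℝ (H x)).Nonempty := hHx_ne.mono (subset_convexHull ℝ _)
  rw [← hK_closed.closure_eq]
  rw [Metric.mem_closure_iff_infDist_zero hK_ne]
  have hle : ∀ ε > (0 : ℝ), Metric.infDist v (convexHull ℝ (H x)) ≤ ε := by
    intro ε hε
    obtain ⟨w, hw, b, hb, hvw⟩ := key ε hε
    have : dist v w ≤ ε := by
      rw [dist_eq_norm]
      have hb2 : v - w = b := by rw [← hvw]; exact add_sub_cancel_left w b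
      rw [hb2]
      simpa [dist_zero_right] using hb
    exact le_trans (Metric.infDist_le_dist_of_mem hw) this
  exact le_antisymm (le_of_forall_pos_le_add (by intro ε hε; simpa using hle ε hε))
    Metric.infDist_nonneg
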